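/- Fix a natural number T ≥ 1, reals l > 0 and η > 0, and define f̃ : ℝ^{T+1} → ℝ by f̃(x) = max_{1 ≤ r ≤ T+1} (l·x_r − 5l²·(r−1)/η). Then: (i) f̃ is convex; (ii) f̃ is l-Lipschitz with respect to the Euclidean norm, i.e., |f̃(x) − f̃(y)| ≤ l·‖x − y‖ for all x, y ∈ ℝ^{T+1}; and (iii) the minimum of f̃ over the closed Euclidean unit ball B₂(0,1) = {x ∈ ℝ^{T+1} : ‖x‖ ≤ 1} satisfies min_{x ∈ B₂(0,1)} f̃(x) ≤ −l/√(T+1). -/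

import Mathlib

open Finset

lemma coord_le_norm {n : ℕ} (z : EuclideanSpace ℝ (Fin n)) (r : Fin n) :
    |z r| ≤ ‖z‖ := by
  rw [EuclideanSpace.norm_eq]
  rw [show |z r| = Real.sqrt (z r ^ 2) by rw [Real.sqrt_sq_eq_abs]]
  apply Real.sqrt_le_sqrt
  have := Finset.single_le_sum (f := fun i => z i ^ 2) (fun i _ => sq_nonneg _)
    (Finset.mem_univ r)
  simpa [sq_abs] using this

theorem stmt16 (T : ℕ) (hT : 1 ≤ T) (l η : ℝ) (hl : 0 < l) (hη : 0 < η)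
    (ftil : EuclideanSpace ℝ (Fin (T + 1)) → ℝ)
    (hftil : ∀ x, ftil x = Finset.univ.sup' Finset.univ_nonempty
      (fun r : Fin (T + 1) => l * x r - 5 * l^2 * ((r : ℕ) : ℝ) / η)) :
    ConvexOn ℝ Set.univ ftil ∧
    (∀ x y, |ftil x - ftil y| ≤ l * ‖x - y‖) ∧
    (∃ x : EuclideanSpace ℝ (Fin (T + 1)), ‖x‖ ≤ 1 ∧
      ftil x ≤ -l / Real.sqrt ((T : ℝ) + 1)) := by
  set g : Fin (T + 1) → EuclideanSpace ℝ (Fin (T + 1)) → ℝ :=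
    fun r x => l * x r - 5 * l^2 * ((r : ℕ) : ℝ) / η with hg
  have hle : ∀ x r, g r x ≤ ftil x := fun x r => by
    rw [hftil x]
    exact Finset.le_sup' (fun r : Fin (T+1) => l * x r - 5 * l^2 * ((r : ℕ) : ℝ) / η)
      (Finset.mem_univ r)
  refine ⟨?_, ?_, ?_⟩
  · refine ⟨convex_univ, ?_⟩
    intro x _ y _ a b ha hb hab
    rw [hftil]
    apply Finset.sup'_le
    intro r _
    have h1 : g r (a • x + b • y) = a * g r x + b * g r y := by
      simp only [hg]
      have : (a • x + b • y : EuclideanSpace ℝ (Fin (T+1))) r = a * x r + b * y r := rfl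
      rw [this]
      linear_combination ((5 * l^2 * ((r : ℕ) : ℝ) / η)) * hab
    calc g r (a • x + b • y) = a * g r x + b * g r y := h1
      _ ≤ a * ftil x + b * ftil y := by
          have := hle x r; have := hle y r
          nlinarith [hle x r, hle y r]
      _ = a • ftil x + b • ftil y := rfl
  · have key : ∀ x y : EuclideanSpace ℝ (Fin (T+1)),
        ftil x - ftil y ≤ l * ‖x - y‖ := by
      intro x y
      rw [hftil x, sub_le_iff_le_add]
      apply Finset.sup'_le
      intro r _
      have h1 : g r x = g r y + l * (x r - y r) := by simp only [hg]; ring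
      have h2 : l * (x r - y r) ≤ l * ‖x - y‖ := by
        have : x r - y r ≤ |(x - y) r| := by
          have : (x - y : EuclideanSpace ℝ (Fin (T+1))) r = x r - y r := rfl
          rw [this]; exact le_abs_self _
        have h3 := coord_le_norm (x - y) r
        nlinarith
      calc g r x = g r y + l * (x r - y r) := h1
        _ ≤ ftil y + l * ‖x - y‖ := add_le_add (hle y r) h2
        _ = l * ‖x - y‖ + ftil y := by ring
    intro x y
    rw [abs_sub_le_iff]
    exact ⟨key x y, by simpa [norm_sub_rev] using key y x⟩
  · have hT1 : (0 : ℝ) < (T : ℝ) + 1 := by positivity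
    have hs : (0 : ℝ) < Real.sqrt ((T : ℝ) + 1) := Real.sqrt_pos.mpr hT1
    refine ⟨WithLp.toLp 2 (fun _ => -1 / Real.sqrt ((T : ℝ) + 1)), ?_, ?_⟩
    · rw [EuclideanSpace.norm_eq]
      have : ∀ i : Fin (T+1),
          ((fun _ : Fin (T+1) => -1 / Real.sqrt ((T : ℝ) + 1)) i : ℝ) =
          -1 / Real.sqrt ((T : ℝ) + 1) := fun _ => rfl
      have hsum : ∑ i : Fin (T+1), ‖(-1 / Real.sqrt ((T : ℝ) + 1))‖ ^ 2 = 1 := by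
        rw [Finset.sum_const, Finset.card_univ, Fintype.card_fin]
        rw [Real.norm_eq_abs, sq_abs, div_pow, neg_one_sq,
          Real.sq_sqrt hT1.le]
        rw [nsmul_eq_mul]; push_cast
        field_simp
      rw [show (∑ i : Fin (T+1), ‖(WithLp.toLp 2 (fun _ : Fin (T+1) => -1 / Real.sqrt ((T : ℝ) + 1)) : EuclideanSpace ℝ (Fin (T+1))) i‖ ^ 2) = 1 from hsum]
      simp
    · rw [hftil]
      apply Finset.sup'_le
      intro r _
      have hc : 0 ≤ 5 * l^2 * ((r : ℕ) : ℝ) / η := by positivity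
      have : l * (-1 / Real.sqrt ((T : ℝ) + 1)) = -l / Real.sqrt ((T : ℝ) + 1) := by ring
      calc l * (-1 / Real.sqrt ((T : ℝ) + 1)) - 5 * l^2 * ((r : ℕ) : ℝ) / η
          ≤ l * (-1 / Real.sqrt ((T : ℝ) + 1)) := by linarith
        _ = -l / Real.sqrt ((T : ℝ) + 1) := this
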